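/- If a sequence of GEV distribution functions F(·; θ_n) with parameters θ_n = (γ_n, μ_n, σ_n) converges weakly (equivalently, pointwise) to a GEV distribution function F(·; θ_0), then θ_n → θ_0 in ℝ × ℝ × (0,∞). -/

import Mathlib

open Filter

/-- The GEV distribution function with parameter `θ = (γ, μ, σ)`. -/
noncomputable def gevCDF (γ μ σ : ℝ) (x : ℝ) : ℝ :=
  if γ = 0 then Real.exp (-Real.exp (-(x - μ) / σ))
  else if 0 < 1 + γ * (x - μ) / σ then Real.exp (-(1 + γ * (x - μ) / σ) ^ (-1 / γ))
  else if 0 < γ then 0 else 1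

/-- Lemma D.1: if a sequence of GEV distribution functions with parameters
`θ_n = (γ_n, μ_n, σ_n)` converges weakly (equivalently, pointwise) to the GEV
distribution function with parameter `θ_0 = (γ_0, μ_0, σ_0)`, then `θ_n → θ_0` in
`ℝ × ℝ × (0,∞)`. -/

noncomputable def gevG (γ t : ℝ) : ℝ := if γ = 0 then -Real.log t else (t ^ (-γ) - 1) / γ

noncomputable def gevH (γ : ℝ) : ℝ := if γ = 0 then 1 else (Real.exp γ - 1) / γ

open Real in
lemma gevCDF_mono {γ μ σ : ℝ} (hσ : 0 < σ) : Monotone (gevCDF γ μ σ) := by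
  intro a b hab
  unfold gevCDF
  rcases eq_or_ne γ 0 with h0 | h0
  · simp only [h0, if_pos rfl]
    have : -(b - μ) / σ ≤ -(a - μ) / σ := by
      apply (div_le_div_iff_of_pos_right hσ).mpr; linarith
    exact Real.exp_le_exp.mpr (neg_le_neg (Real.exp_le_exp.mpr this))
  · simp only [if_neg h0]
    rcases lt_or_gt_of_ne h0 with hneg | hpos
    · have hsb : 1 + γ * (b - μ) / σ ≤ 1 + γ * (a - μ) / σ := by
        have h1 : γ * (b - μ) / σ ≤ γ * (a - μ) / σ := by
          apply (div_le_div_iff_of_pos_right hσ).mpr; nlinarith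
        linarith
      have he : 0 < -1 / γ := by
        rw [div_pos_iff]; right; constructor <;> linarith
      by_cases hb : 0 < 1 + γ * (b - μ) / σ
      · have ha : 0 < 1 + γ * (a - μ) / σ := lt_of_lt_of_le hb hsb
        rw [if_pos ha, if_pos hb]
        apply Real.exp_le_exp.mpr
        apply neg_le_neg
        exact Real.rpow_le_rpow hb.le hsb he.le
      · rw [if_neg hb, if_neg (not_lt.mpr hneg.le)]
        by_cases ha : 0 < 1 + γ * (a - μ) / σ
        · rw [if_pos ha]
          rw [Real.exp_le_one_iff]
          simp only [neg_nonpos]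
          positivity
        · rw [if_neg ha]
    · have hsb : 1 + γ * (a - μ) / σ ≤ 1 + γ * (b - μ) / σ := by
        have h1 : γ * (a - μ) / σ ≤ γ * (b - μ) / σ := by
          apply (div_le_div_iff_of_pos_right hσ).mpr; nlinarith
        linarith
      by_cases ha : 0 < 1 + γ * (a - μ) / σ
      · have hb : 0 < 1 + γ * (b - μ) / σ := lt_of_lt_of_le ha hsb
        rw [if_pos ha, if_pos hb]
        apply Real.exp_le_exp.mpr
        apply neg_le_neg
        apply Real.rpow_le_rpow_of_nonpos ha hsb
        rw [div_nonpos_iff]; right; constructor <;> linarith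
      · rw [if_neg ha, if_pos hpos]
        by_cases hb : 0 < 1 + γ * (b - μ) / σ
        · rw [if_pos hb]; positivity
        · rw [if_neg hb]

open Real in
lemma gevCDF_quantile {γ μ σ : ℝ} (hσ : 0 < σ) {t : ℝ} (ht : 0 < t) :
    gevCDF γ μ σ (μ + σ * gevG γ t) = Real.exp (-t) := by
  unfold gevCDF gevG
  rcases eq_or_ne γ 0 with h0 | h0
  · subst h0
    rw [if_pos rfl, if_pos rfl]
    have h1 : -(μ + σ * -Real.log t - μ) / σ = Real.log t := by
      field_simp
      ring
    rw [h1, Real.exp_log ht]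
  · simp only [if_neg h0]
    have key : 1 + γ * (μ + σ * ((t ^ (-γ) - 1) / γ) - μ) / σ = t ^ (-γ) := by
      field_simp; ring
    rw [key, if_pos (Real.rpow_pos_of_pos ht _),
      ← Real.rpow_mul ht.le, show (-γ) * (-1/γ) = 1 by field_simp, Real.rpow_one]

lemma gevG_one (γ : ℝ) : gevG γ 1 = 0 := by
  unfold gevG
  rcases eq_or_ne γ 0 with h0 | h0
  · simp [h0]
  · simp [h0, Real.one_rpow]

lemma gevG_exp_neg_one (γ : ℝ) : gevG γ (Real.exp (-1)) = gevH γ := by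
  unfold gevG gevH
  rcases eq_or_ne γ 0 with h0 | h0
  · simp [h0, Real.log_exp]
  · rw [if_neg h0, if_neg h0, Real.rpow_def_of_pos (Real.exp_pos _), Real.log_exp]
    norm_num

lemma gevG_exp_one (γ : ℝ) : gevG γ (Real.exp 1) = -gevH (-γ) := by
  unfold gevG gevH
  rcases eq_or_ne γ 0 with h0 | h0
  · simp [h0, Real.log_exp]
  · rw [if_neg h0, if_neg (neg_ne_zero.mpr h0), Real.rpow_def_of_pos (Real.exp_pos _),
      Real.log_exp]
    rw [one_mul]
    ring

lemma gevH_pos (γ : ℝ) : 0 < gevH γ := by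
  unfold gevH
  rcases eq_or_ne γ 0 with h0 | h0
  · simp [h0]
  · rw [if_neg h0]
    rcases lt_or_gt_of_ne h0 with hneg | hpos
    · apply div_pos_of_neg_of_neg
      · simp only [sub_neg]; exact Real.exp_lt_one_iff.mpr hneg
      · exact hneg
    · apply div_pos
      · simp only [sub_pos]; exact Real.one_lt_exp_iff.mpr hpos
      · exact hpos

lemma gevH_mul (γ : ℝ) : gevH γ = Real.exp γ * gevH (-γ) := by
  unfold gevH
  rcases eq_or_ne γ 0 with h0 | h0
  · simp [h0]
  · rw [if_neg h0, if_neg (neg_ne_zero.mpr h0), Real.exp_neg]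
    have := Real.exp_ne_zero γ
    field_simp
    ring

open Real in
lemma gevH_continuousAt (γ₀ : ℝ) : ContinuousAt gevH γ₀ := by
  rcases eq_or_ne γ₀ 0 with h0 | h0
  · subst h0
    have hs : Tendsto (slope Real.exp 0) (nhdsWithin 0 {0}ᶜ) (nhds 1) := by
      have h := Real.hasDerivAt_exp 0
      rw [hasDerivAt_iff_tendsto_slope] at h
      simpa using h
    have h1 : gevH 0 = 1 := by simp [gevH]
    rw [ContinuousAt, h1, ← nhdsNE_sup_pure 0, tendsto_sup]
    constructor
    · apply hs.congr'
      filter_upwards [self_mem_nhdsWithin] with x hx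
      simp only [Set.mem_compl_iff, Set.mem_singleton_iff] at hx
      unfold gevH
      rw [if_neg hx, slope_def_field]
      simp [Real.exp_zero]
    · have : Tendsto gevH (pure (0:ℝ)) (pure (gevH 0)) := tendsto_pure_pure _ _
      rw [h1] at this
      exact this.mono_right (pure_le_nhds _)
  · have hev : ∀ᶠ x in nhds γ₀, (fun y => (Real.exp y - 1) / y) x = gevH x := by
      filter_upwards [eventually_ne_nhds h0] with x hx
      unfold gevH; rw [if_neg hx]
    apply ContinuousAt.congr _ hev
    exact ((Real.continuous_exp.continuousAt.sub continuousAt_const).div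
      continuousAt_id h0)

lemma gevG_continuousAt (γ₀ : ℝ) {t : ℝ} (ht : 0 < t) :
    ContinuousAt (gevG γ₀) t := by
  unfold gevG
  rcases eq_or_ne γ₀ 0 with h0 | h0
  · simp only [h0, if_pos rfl]
    exact (Real.continuousAt_log ht.ne').neg
  · simp only [if_neg h0]
    exact ((Real.continuousAt_rpow_const t (-γ₀) (Or.inl ht.ne')).sub
      continuousAt_const).div continuousAt_const h0

theorem stmt_16 (γ μ σ : ℕ → ℝ) (γ₀ μ₀ σ₀ : ℝ)
    (hσ : ∀ n, 0 < σ n) (hσ₀ : 0 < σ₀)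
    (hconv : ∀ x : ℝ, Tendsto (fun n => gevCDF (γ n) (μ n) (σ n) x) atTop
      (nhds (gevCDF γ₀ μ₀ σ₀ x))) :
    Tendsto γ atTop (nhds γ₀) ∧ Tendsto μ atTop (nhds μ₀) ∧
      Tendsto σ atTop (nhds σ₀) := by
  -- quantile convergence
  have hquant : ∀ t : ℝ, 0 < t →
      Tendsto (fun n => μ n + σ n * gevG (γ n) t) atTop (nhds (μ₀ + σ₀ * gevG γ₀ t)) := by
    intro t ht
    rw [Metric.tendsto_nhds]
    intro ε hε
    set q0 : ℝ → ℝ := fun s => μ₀ + σ₀ * gevG γ₀ s with hq0def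
    have hcont : ContinuousAt q0 t :=
      continuousAt_const.add (continuousAt_const.mul (gevG_continuousAt γ₀ ht))
    obtain ⟨δ, hδpos, hδ⟩ := Metric.continuousAt_iff.mp hcont ε hε
    have hmδ : 0 < min δ t := lt_min hδpos ht
    set t₁ := t + min δ t / 2 with ht₁def
    set t₂ := t - min δ t / 2 with ht₂def
    have ht₁ : t < t₁ := by simp only [ht₁def]; linarith
    have ht₂ : t₂ < t := by simp only [ht₂def]; linarith
    have ht₂pos : 0 < t₂ := by
      have := min_le_right δ t; simp only [ht₂def]; linarith
    have hd1 : dist t₁ t < δ := by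
      have := min_le_left δ t
      rw [Real.dist_eq, ht₁def]
      rw [abs_lt]; constructor <;> [linarith; linarith]
    have hd2 : dist t₂ t < δ := by
      have := min_le_left δ t
      rw [Real.dist_eq, ht₂def]
      rw [abs_lt]; constructor <;> [linarith; linarith]
    have hq1 : |q0 t₁ - q0 t| < ε := by
      have := hδ hd1; rwa [Real.dist_eq] at this
    have hq2 : |q0 t₂ - q0 t| < ε := by
      have := hδ hd2; rwa [Real.dist_eq] at this
    have hb1 : gevCDF γ₀ μ₀ σ₀ (q0 t - ε) < Real.exp (-t) := by
      calc gevCDF γ₀ μ₀ σ₀ (q0 t - ε) ≤ gevCDF γ₀ μ₀ σ₀ (q0 t₁) := by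
            apply gevCDF_mono hσ₀
            have := abs_lt.mp hq1
            linarith [this.1]
        _ = Real.exp (-t₁) := gevCDF_quantile hσ₀ (ht.trans ht₁)
        _ < Real.exp (-t) := Real.exp_lt_exp.mpr (by linarith)
    have hb2 : Real.exp (-t) < gevCDF γ₀ μ₀ σ₀ (q0 t + ε) := by
      calc Real.exp (-t) < Real.exp (-t₂) := Real.exp_lt_exp.mpr (by linarith)
        _ = gevCDF γ₀ μ₀ σ₀ (q0 t₂) := (gevCDF_quantile hσ₀ ht₂pos).symm
        _ ≤ gevCDF γ₀ μ₀ σ₀ (q0 t + ε) := by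
            apply gevCDF_mono hσ₀
            have := abs_lt.mp hq2
            linarith [this.2]
    have e1 : ∀ᶠ n in atTop, gevCDF (γ n) (μ n) (σ n) (q0 t - ε) < Real.exp (-t) :=
      (hconv (q0 t - ε)).eventually_lt_const hb1
    have e2 : ∀ᶠ n in atTop, Real.exp (-t) < gevCDF (γ n) (μ n) (σ n) (q0 t + ε) :=
      (hconv (q0 t + ε)).eventually_const_lt hb2
    filter_upwards [e1, e2] with n h1 h2
    rw [Real.dist_eq, abs_lt]
    have hq0t : q0 t = μ₀ + σ₀ * gevG γ₀ t := rfl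
    constructor
    · by_contra hc
      push_neg at hc
      have hle : μ n + σ n * gevG (γ n) t ≤ q0 t - ε := by rw [hq0t]; linarith
      have := gevCDF_mono (γ:=γ n) (μ:=μ n) (hσ n) hle
      rw [gevCDF_quantile (hσ n) ht] at this
      linarith
    · by_contra hc
      push_neg at hc
      have hle : q0 t + ε ≤ μ n + σ n * gevG (γ n) t := by rw [hq0t]; linarith
      have := gevCDF_mono (γ:=γ n) (μ:=μ n) (hσ n) hle
      rw [gevCDF_quantile (hσ n) ht] at this
      linarith
  -- μ convergence
  have hμ : Tendsto μ atTop (nhds μ₀) := by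
    have h := hquant 1 one_pos
    simp only [gevG_one, mul_zero, add_zero] at h
    exact h
  -- A_n = σ n * gevH (γ n)
  have hA : Tendsto (fun n => σ n * gevH (γ n)) atTop (nhds (σ₀ * gevH γ₀)) := by
    have h := (hquant (Real.exp (-1)) (Real.exp_pos _)).sub hμ
    simp only [gevG_exp_neg_one] at h
    have heq : (fun n => μ n + σ n * gevH (γ n) - μ n) = fun n => σ n * gevH (γ n) := by
      funext n; ring
    rw [heq] at h
    convert h using 2
    ring
  have hB : Tendsto (fun n => σ n * gevH (-γ n)) atTop (nhds (σ₀ * gevH (-γ₀))) := by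
    have h := hμ.sub (hquant (Real.exp 1) (Real.exp_pos _))
    simp only [gevG_exp_one] at h
    have heq : (fun n => μ n - (μ n + σ n * -gevH (-γ n))) = fun n => σ n * gevH (-γ n) := by
      funext n; ring
    rw [heq] at h
    convert h using 2
    ring
  -- exp γ convergence
  have hExp : Tendsto (fun n => Real.exp (γ n)) atTop (nhds (Real.exp γ₀)) := by
    have hBne : σ₀ * gevH (-γ₀) ≠ 0 := (mul_pos hσ₀ (gevH_pos _)).ne'
    have h := hA.div hB hBne
    have hlim : σ₀ * gevH γ₀ / (σ₀ * gevH (-γ₀)) = Real.exp γ₀ := by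
      rw [gevH_mul γ₀]
      rw [show σ₀ * (Real.exp γ₀ * gevH (-γ₀)) = Real.exp γ₀ * (σ₀ * gevH (-γ₀)) by ring]
      exact mul_div_cancel_right₀ _ hBne
    rw [hlim] at h
    apply h.congr
    intro n
    show σ n * gevH (γ n) / (σ n * gevH (-γ n)) = Real.exp (γ n)
    rw [gevH_mul (γ n)]
    rw [show σ n * (Real.exp (γ n) * gevH (-γ n)) = Real.exp (γ n) * (σ n * gevH (-γ n)) by ring]
    exact mul_div_cancel_right₀ _ ((mul_pos (hσ n) (gevH_pos _)).ne')
  have hγ : Tendsto γ atTop (nhds γ₀) := by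
    have hlog := (Real.continuousAt_log (Real.exp_pos γ₀).ne').tendsto.comp hExp
    simp only [Function.comp_def, Real.log_exp] at hlog
    exact hlog
  refine ⟨hγ, hμ, ?_⟩
  have hHγ : Tendsto (fun n => gevH (γ n)) atTop (nhds (gevH γ₀)) :=
    (gevH_continuousAt γ₀).tendsto.comp hγ
  have h := hA.div hHγ (gevH_pos γ₀).ne'
  rw [mul_div_cancel_right₀ _ (gevH_pos γ₀).ne'] at h
  apply h.congr
  intro n
  show σ n * gevH (γ n) / gevH (γ n) = σ n
  exact mul_div_cancel_right₀ _ (gevH_pos (γ n)).ne'
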